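/- If M is a product of matrices from {R̂(X), R̂(Y), R̂(Z)} (the 4×4 channel representations of the single-qubit π/8 rotations about X, Y, Z) of length k ≥ 1 in which no two consecutive factors are equal, then the lower-right 3×3 block of M has exactly one row with sde equal to k−1 (the row labeled by the leftmost factor's axis) and two rows with sde equal to k. -/

import Mathlib

open Matrix Zsqrtd

/-- Smallest denominator exponent in `ℤ[1/√2]`. -/
noncomputable def sde (v : ℝ) : ℕ :=
  sInf {k : ℕ | ∃ a b : ℤ, v = (a + b * Real.sqrt 2) / (Real.sqrt 2) ^ k}

/-- Channel representations of the π/8 rotations about the `X`, `Y`, `Z` axes,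
rows/columns indexed by `I, X, Y, Z`. Axis `0 = X`, `1 = Y`, `2 = Z`. -/
noncomputable def Rhat : Fin 3 → Matrix (Fin 4) (Fin 4) ℝ
  | 0 => !![1, 0, 0, 0;
            0, 1, 0, 0;
            0, 0, (Real.sqrt 2)⁻¹, -(Real.sqrt 2)⁻¹;
            0, 0, (Real.sqrt 2)⁻¹, (Real.sqrt 2)⁻¹]
  | 1 => !![1, 0, 0, 0;
            0, (Real.sqrt 2)⁻¹, 0, (Real.sqrt 2)⁻¹;
            0, 0, 1, 0;
            0, -(Real.sqrt 2)⁻¹, 0, (Real.sqrt 2)⁻¹]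
  | 2 => !![1, 0, 0, 0;
            0, (Real.sqrt 2)⁻¹, -(Real.sqrt 2)⁻¹, 0;
            0, (Real.sqrt 2)⁻¹, (Real.sqrt 2)⁻¹, 0;
            0, 0, 0, 1]

/-- `sde` of row `a` (labeling `X`, `Y` or `Z`) of the lower-right 3×3 block. -/
noncomputable def rowSde (M : Matrix (Fin 4) (Fin 4) ℝ) (a : Fin 3) : ℕ :=
  Finset.univ.sup fun c : Fin 3 => sde (M a.succ c.succ)

noncomputable def toR : ℤ√2 →+* ℝ := Zsqrtd.toReal (by norm_num)

def S : Fin 3 → Matrix (Fin 3) (Fin 3) (ℤ√2)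
  | 0 => !![sqrtd, 0, 0; 0, 1, -1; 0, 1, 1]
  | 1 => !![1, 0, 1; 0, sqrtd, 0; -1, 0, 1]
  | 2 => !![1, -1, 0; 1, 1, 0; 0, 0, sqrtd]

def SInv (N : Matrix (Fin 3) (Fin 3) (ℤ√2)) (u : Fin 3) : Prop :=
  (∀ c, Even (N u c).re) ∧ (∃ c, Odd (N u c).im) ∧
    ∀ a, a ≠ u → ∃ c, Odd (N a c).re

lemma inv_base (u : Fin 3) : SInv (S u) u := by
  fin_cases u
  · exact ⟨fun c => by fin_cases c <;> simp [S, Matrix.vecHead, Matrix.vecTail],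
      ⟨0, by simp [S]⟩,
      fun a ha => ⟨1, by
        fin_cases a <;>
          simp only [Fin.mk_zero, Fin.mk_one, Fin.reduceFinMk, ne_eq, not_true_eq_false] at ha ⊢ <;>
          simp [S, Matrix.vecHead, Matrix.vecTail]⟩⟩
  · exact ⟨fun c => by fin_cases c <;> simp [S, Matrix.vecHead, Matrix.vecTail],
      ⟨1, by simp [S, Matrix.vecHead, Matrix.vecTail]⟩,
      fun a ha => ⟨0, by
        fin_cases a <;>
          simp only [Fin.mk_zero, Fin.mk_one, Fin.reduceFinMk, ne_eq, not_true_eq_false] at ha ⊢ <;>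
          simp [S, Matrix.vecHead, Matrix.vecTail]⟩⟩
  · exact ⟨fun c => by fin_cases c <;> simp [S, Matrix.vecHead, Matrix.vecTail],
      ⟨2, by simp [S, Matrix.vecHead, Matrix.vecTail]⟩,
      fun a ha => ⟨0, by
        fin_cases a <;>
          simp only [Fin.mk_zero, Fin.mk_one, Fin.reduceFinMk, ne_eq, not_true_eq_false] at ha ⊢ <;>
          simp [S, Matrix.vecHead, Matrix.vecTail]⟩⟩

lemma row00 (N : Matrix (Fin 3) (Fin 3) (ℤ√2)) (c : Fin 3) : (S 0 * N) 0 c = sqrtd * N 0 c := by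
  simp [S, Matrix.mul_apply, Fin.sum_univ_three, Matrix.vecHead, Matrix.vecTail]
lemma row01 (N : Matrix (Fin 3) (Fin 3) (ℤ√2)) (c : Fin 3) : (S 0 * N) 1 c = N 1 c - N 2 c := by
  simp [S, Matrix.mul_apply, Fin.sum_univ_three, Matrix.vecHead, Matrix.vecTail]; ring
lemma row02 (N : Matrix (Fin 3) (Fin 3) (ℤ√2)) (c : Fin 3) : (S 0 * N) 2 c = N 1 c + N 2 c := by
  simp [S, Matrix.mul_apply, Fin.sum_univ_three, Matrix.vecHead, Matrix.vecTail]
lemma row10 (N : Matrix (Fin 3) (Fin 3) (ℤ√2)) (c : Fin 3) : (S 1 * N) 0 c = N 0 c + N 2 c := by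
  simp [S, Matrix.mul_apply, Fin.sum_univ_three, Matrix.vecHead, Matrix.vecTail]
lemma row11 (N : Matrix (Fin 3) (Fin 3) (ℤ√2)) (c : Fin 3) : (S 1 * N) 1 c = sqrtd * N 1 c := by
  simp [S, Matrix.mul_apply, Fin.sum_univ_three, Matrix.vecHead, Matrix.vecTail]
lemma row12 (N : Matrix (Fin 3) (Fin 3) (ℤ√2)) (c : Fin 3) : (S 1 * N) 2 c = -N 0 c + N 2 c := by
  simp [S, Matrix.mul_apply, Fin.sum_univ_three, Matrix.vecHead, Matrix.vecTail]
lemma row20 (N : Matrix (Fin 3) (Fin 3) (ℤ√2)) (c : Fin 3) : (S 2 * N) 0 c = N 0 c - N 1 c := by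
  simp [S, Matrix.mul_apply, Fin.sum_univ_three, Matrix.vecHead, Matrix.vecTail]; ring
lemma row21 (N : Matrix (Fin 3) (Fin 3) (ℤ√2)) (c : Fin 3) : (S 2 * N) 1 c = N 0 c + N 1 c := by
  simp [S, Matrix.mul_apply, Fin.sum_univ_three, Matrix.vecHead, Matrix.vecTail]
lemma row22 (N : Matrix (Fin 3) (Fin 3) (ℤ√2)) (c : Fin 3) : (S 2 * N) 2 c = sqrtd * N 2 c := by
  simp [S, Matrix.mul_apply, Fin.sum_univ_three, Matrix.vecHead, Matrix.vecTail]

lemma sqrtd_mul_re (z : ℤ√2) : ((sqrtd * z : ℤ√2)).re = 2 * z.im := by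
  simp [Zsqrtd.re_mul]
lemma sqrtd_mul_im (z : ℤ√2) : ((sqrtd * z : ℤ√2)).im = z.re := by
  simp [Zsqrtd.im_mul]

lemma inv_step (u t : Fin 3) (h : u ≠ t) (N : Matrix (Fin 3) (Fin 3) (ℤ√2))
    (hN : SInv N t) : SInv (S u * N) u := by
  obtain ⟨h1, -, h3⟩ := hN
  fin_cases u <;> fin_cases t <;>
      simp only [Fin.mk_zero, Fin.mk_one, Fin.reduceFinMk, ne_eq, not_true_eq_false, not_false_eq_true] at h h1 h3 ⊢ <;>
      clear h
  -- u = 0, t = 1, w = 2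
  · obtain ⟨c1, hc1⟩ := h3 0 (by decide)
    obtain ⟨c0, hw⟩ := h3 2 (by decide)
    refine ⟨fun c => by rw [row00]; rw [sqrtd_mul_re]; exact even_two_mul _,
      ⟨c1, by rw [row00, sqrtd_mul_im]; exact hc1⟩, fun a ha => ?_⟩
    fin_cases a <;>
      simp only [Fin.mk_zero, Fin.mk_one, Fin.reduceFinMk, ne_eq, not_true_eq_false] at ha ⊢
    · exact ⟨c0, by rw [row01]; rw [Zsqrtd.re_sub]; exact (h1 c0).sub_odd hw⟩
    · exact ⟨c0, by rw [row02]; rw [Zsqrtd.re_add]; exact (h1 c0).add_odd hw⟩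
  -- u = 0, t = 2, w = 1
  · obtain ⟨c1, hc1⟩ := h3 0 (by decide)
    obtain ⟨c0, hw⟩ := h3 1 (by decide)
    refine ⟨fun c => by rw [row00]; rw [sqrtd_mul_re]; exact even_two_mul _,
      ⟨c1, by rw [row00, sqrtd_mul_im]; exact hc1⟩, fun a ha => ?_⟩
    fin_cases a <;>
      simp only [Fin.mk_zero, Fin.mk_one, Fin.reduceFinMk, ne_eq, not_true_eq_false] at ha ⊢
    · exact ⟨c0, by rw [row01]; rw [Zsqrtd.re_sub]; exact hw.sub_even (h1 c0)⟩
    · exact ⟨c0, by rw [row02]; rw [Zsqrtd.re_add]; exact hw.add_even (h1 c0)⟩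
  -- u = 1, t = 0, w = 2
  · obtain ⟨c1, hc1⟩ := h3 1 (by decide)
    obtain ⟨c0, hw⟩ := h3 2 (by decide)
    refine ⟨fun c => by rw [row11]; rw [sqrtd_mul_re]; exact even_two_mul _,
      ⟨c1, by rw [row11, sqrtd_mul_im]; exact hc1⟩, fun a ha => ?_⟩
    fin_cases a <;>
      simp only [Fin.mk_zero, Fin.mk_one, Fin.reduceFinMk, ne_eq, not_true_eq_false] at ha ⊢
    · exact ⟨c0, by rw [row10]; rw [Zsqrtd.re_add]; exact (h1 c0).add_odd hw⟩
    · exact ⟨c0, by rw [row12]; rw [Zsqrtd.re_add, Zsqrtd.re_neg]; exact ((h1 c0).neg).add_odd hw⟩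
  -- u = 1, t = 2, w = 0
  · obtain ⟨c1, hc1⟩ := h3 1 (by decide)
    obtain ⟨c0, hw⟩ := h3 0 (by decide)
    refine ⟨fun c => by rw [row11]; rw [sqrtd_mul_re]; exact even_two_mul _,
      ⟨c1, by rw [row11, sqrtd_mul_im]; exact hc1⟩, fun a ha => ?_⟩
    fin_cases a <;>
      simp only [Fin.mk_zero, Fin.mk_one, Fin.reduceFinMk, ne_eq, not_true_eq_false] at ha ⊢
    · exact ⟨c0, by rw [row10]; rw [Zsqrtd.re_add]; exact hw.add_even (h1 c0)⟩
    · exact ⟨c0, by rw [row12]; rw [Zsqrtd.re_add, Zsqrtd.re_neg]; exact (hw.neg).add_even (h1 c0)⟩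
  -- u = 2, t = 0, w = 1
  · obtain ⟨c1, hc1⟩ := h3 2 (by decide)
    obtain ⟨c0, hw⟩ := h3 1 (by decide)
    refine ⟨fun c => by rw [row22]; rw [sqrtd_mul_re]; exact even_two_mul _,
      ⟨c1, by rw [row22, sqrtd_mul_im]; exact hc1⟩, fun a ha => ?_⟩
    fin_cases a <;>
      simp only [Fin.mk_zero, Fin.mk_one, Fin.reduceFinMk, ne_eq, not_true_eq_false] at ha ⊢
    · exact ⟨c0, by rw [row20]; rw [Zsqrtd.re_sub]; exact (h1 c0).sub_odd hw⟩
    · exact ⟨c0, by rw [row21]; rw [Zsqrtd.re_add]; exact (h1 c0).add_odd hw⟩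
  -- u = 2, t = 1, w = 0
  · obtain ⟨c1, hc1⟩ := h3 2 (by decide)
    obtain ⟨c0, hw⟩ := h3 0 (by decide)
    refine ⟨fun c => by rw [row22]; rw [sqrtd_mul_re]; exact even_two_mul _,
      ⟨c1, by rw [row22, sqrtd_mul_im]; exact hc1⟩, fun a ha => ?_⟩
    fin_cases a <;>
      simp only [Fin.mk_zero, Fin.mk_one, Fin.reduceFinMk, ne_eq, not_true_eq_false] at ha ⊢
    · exact ⟨c0, by rw [row20]; rw [Zsqrtd.re_sub]; exact hw.sub_even (h1 c0)⟩
    · exact ⟨c0, by rw [row21]; rw [Zsqrtd.re_add]; exact hw.add_even (h1 c0)⟩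

lemma inv_chain : ∀ (l : List (Fin 3)) (u : Fin 3), List.Chain' (· ≠ ·) (u :: l) →
    SInv (((u :: l).map S).prod) u := by
  intro l
  induction l with
  | nil => intro u _; simpa using inv_base u
  | cons t l ih =>
    intro u hc
    simp only [List.Chain', List.isChain_cons_cons] at hc
    have := inv_step u t hc.1 _ (ih t hc.2)
    simpa [List.prod_cons] using this

lemma toR_apply (z : ℤ√2) : toR z = z.re + z.im * Real.sqrt 2 := by
  simp [toR, Zsqrtd.toReal_apply]

lemma toR_inj : Function.Injective toR :=
  Zsqrtd.toReal_injective (by norm_num)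
    (fun n h => by
      have hd : n ∣ 2 := ⟨n, h⟩
      have habs : |n| ≤ 2 := Int.le_of_dvd (by norm_num) ((abs_dvd _ _).mpr hd)
      rw [abs_le] at habs
      obtain ⟨hb1, hb2⟩ := habs
      interval_cases n <;> omega)

lemma toR_sqrtd : toR sqrtd = Real.sqrt 2 := by simp [toR_apply]

lemma sqrt2_ne : Real.sqrt 2 ≠ 0 := by positivity

lemma sde_le (k : ℕ) (z : ℤ√2) : sde (toR z / Real.sqrt 2 ^ k) ≤ k :=
  Nat.sInf_le ⟨z.re, z.im, by rw [toR_apply]⟩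

lemma even_re_mul_sqrtd (w : ℤ√2) : Even ((w * sqrtd).re) := by
  have h : (w * sqrtd).re = 2 * w.im := by
    simp [Zsqrtd.re_mul]
  rw [h]
  exact even_two_mul _

lemma sde_eq_of_odd (z : ℤ√2) (k : ℕ) (h : Odd z.re) :
    sde (toR z / Real.sqrt 2 ^ k) = k := by
  refine le_antisymm (sde_le k z) ?_
  refine le_csInf ⟨k, z.re, z.im, by rw [toR_apply]⟩ ?_
  rintro m ⟨c, d, hm⟩
  by_contra hlt
  push_neg at hlt
  -- toR z / √2^k = toR ⟨c,d⟩ / √2^m  with m < k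
  have hm' : toR z / Real.sqrt 2 ^ k = toR (⟨c, d⟩ : ℤ√2) / Real.sqrt 2 ^ m := by
    rw [hm, toR_apply]
  have hk : Real.sqrt 2 ^ k = Real.sqrt 2 ^ m * Real.sqrt 2 ^ (k - m) := by
    rw [← pow_add]; congr 1; omega
  have hz : toR z = toR (⟨c, d⟩ : ℤ√2) * Real.sqrt 2 ^ (k - m) := by
    have h1 : toR z * Real.sqrt 2 ^ m = toR (⟨c, d⟩ : ℤ√2) * Real.sqrt 2 ^ k := by
      rw [div_eq_div_iff (by positivity) (by positivity)] at hm'; exact hm'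
    have h2 : toR (⟨c, d⟩ : ℤ√2) * Real.sqrt 2 ^ k
        = (toR (⟨c, d⟩ : ℤ√2) * Real.sqrt 2 ^ (k - m)) * Real.sqrt 2 ^ m := by
      rw [hk]; ring
    exact mul_right_cancel₀ (pow_ne_zero m sqrt2_ne) (h1.trans h2)
  have hz2 : z = (⟨c, d⟩ : ℤ√2) * sqrtd ^ (k - m) := by
    apply toR_inj
    rw [_root_.map_mul, _root_.map_pow, toR_sqrtd]
    exact hz
  obtain ⟨j, hj⟩ : ∃ j, k - m = j + 1 := ⟨k - m - 1, by omega⟩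
  have : Even z.re := by
    rw [hz2, hj, pow_succ, ← mul_assoc]
    exact even_re_mul_sqrtd _
  exact (Int.not_odd_iff_even.mpr this) h

lemma sde_le_of_even (z : ℤ√2) (k : ℕ) (hk : 1 ≤ k) (h : Even z.re) :
    ∃ w : ℤ√2, toR z / Real.sqrt 2 ^ k = toR w / Real.sqrt 2 ^ (k - 1) ∧
      w.re = z.im := by
  obtain ⟨r, hr⟩ := h
  refine ⟨⟨z.im, r⟩, ?_, rfl⟩
  have h1 : toR z = toR (⟨z.im, r⟩ : ℤ√2) * Real.sqrt 2 := by
    rw [toR_apply, toR_apply, hr]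
    have hs : Real.sqrt 2 * Real.sqrt 2 = 2 := Real.mul_self_sqrt (by norm_num)
    push_cast
    linear_combination (-(r : ℝ)) * hs
  have h2 : Real.sqrt 2 ^ k = Real.sqrt 2 ^ (k - 1) * Real.sqrt 2 := by
    rw [← pow_succ]; congr 1; omega
  rw [h1, h2, mul_div_mul_right _ _ sqrt2_ne]

noncomputable def blk (M : Matrix (Fin 4) (Fin 4) ℝ) : Matrix (Fin 3) (Fin 3) ℝ :=
  M.submatrix Fin.succ Fin.succ

lemma blk_one : blk 1 = 1 := by
  ext a c
  simp [blk, Matrix.one_apply, Fin.succ_inj]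

lemma Rhat_col0 (t : Fin 3) (a : Fin 3) : Rhat t a.succ 0 = 0 := by
  fin_cases t <;> fin_cases a <;> simp [Rhat, Matrix.vecHead, Matrix.vecTail]

lemma blk_mul (t : Fin 3) (M : Matrix (Fin 4) (Fin 4) ℝ) :
    blk (Rhat t * M) = blk (Rhat t) * blk M := by
  ext a c
  show (Rhat t * M) a.succ c.succ = _
  rw [Matrix.mul_apply, Fin.sum_univ_succ, Rhat_col0, zero_mul, zero_add]
  rfl

lemma map_S (t : Fin 3) : (S t).map toR = Real.sqrt 2 • blk (Rhat t) := by
  have h2 : Real.sqrt 2 * (Real.sqrt 2)⁻¹ = 1 :=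
    mul_inv_cancel₀ (by positivity)
  ext a c
  fin_cases t <;> fin_cases a <;> fin_cases c <;>
    simp [S, Rhat, blk, toR, Matrix.vecHead, Matrix.vecTail, h2]

lemma prod_map (l : List (Fin 3)) :
    ((l.map S).prod).map toR = (Real.sqrt 2) ^ l.length • blk ((l.map Rhat).prod) := by
  induction l with
  | nil => simp [blk_one]
  | cons t l ih =>
    rw [List.map_cons, List.map_cons, List.prod_cons, List.prod_cons,
      Matrix.map_mul, ih, map_S, blk_mul]
    rw [smul_mul_assoc, mul_smul_comm, smul_smul, List.length_cons, pow_succ]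
    congr 1
    ring

lemma entry_eq (l : List (Fin 3)) (a c : Fin 3) :
    ((l.map Rhat).prod) a.succ c.succ
      = toR (((l.map S).prod) a c) / Real.sqrt 2 ^ l.length := by
  have h := congrFun (congrFun (prod_map l) a) c
  simp only [Matrix.map_apply, Matrix.smul_apply, blk, Matrix.submatrix_apply,
    smul_eq_mul] at h
  rw [eq_div_iff (pow_ne_zero _ sqrt2_ne), h]
  exact mul_comm _ _

lemma main_aux (l : List (Fin 3)) (u : Fin 3) (hc : List.Chain' (· ≠ ·) (u :: l)) :
    rowSde (((u :: l).map Rhat).prod) u = (u :: l).length - 1 ∧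
    ∀ a, a ≠ u → rowSde (((u :: l).map Rhat).prod) a = (u :: l).length := by
  obtain ⟨h1, ⟨c1, hc1⟩, h3⟩ := inv_chain l u hc
  have hent : ∀ a c : Fin 3, (((u :: l).map Rhat).prod) a.succ c.succ
      = toR ((((u :: l).map S).prod) a c) / Real.sqrt 2 ^ (u :: l).length :=
    fun a c => entry_eq (u :: l) a c
  have hlen : 1 ≤ (u :: l).length := by simp
  constructor
  · unfold rowSde
    apply _root_.le_antisymm
    · apply Finset.sup_le
      intro c _
      rw [hent]
      obtain ⟨w, hw, -⟩ := sde_le_of_even _ _ hlen (h1 c)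
      rw [hw]
      exact sde_le _ _
    · obtain ⟨w, hw, hwre⟩ := sde_le_of_even _ _ hlen (h1 c1)
      have hh : sde ((((u :: l).map Rhat).prod) u.succ c1.succ) = (u :: l).length - 1 := by
        rw [hent, hw]
        exact sde_eq_of_odd w _ (by rw [hwre]; exact hc1)
      calc (u :: l).length - 1
          = sde ((((u :: l).map Rhat).prod) u.succ c1.succ) := hh.symm
        _ ≤ _ := Finset.le_sup (f := fun c : Fin 3 =>
            sde ((((u :: l).map Rhat).prod) u.succ c.succ)) (Finset.mem_univ c1)
  · intro a ha
    obtain ⟨c0, hodd⟩ := h3 a ha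
    unfold rowSde
    apply _root_.le_antisymm
    · exact Finset.sup_le fun c _ => by rw [hent]; exact sde_le _ _
    · have hh : sde ((((u :: l).map Rhat).prod) a.succ c0.succ) = (u :: l).length := by
        rw [hent]; exact sde_eq_of_odd _ _ hodd
      calc (u :: l).length
          = sde ((((u :: l).map Rhat).prod) a.succ c0.succ) := hh.symm
        _ ≤ _ := Finset.le_sup (f := fun c : Fin 3 =>
            sde ((((u :: l).map Rhat).prod) a.succ c.succ)) (Finset.mem_univ c0)


theorem rowSde_of_reduced_product (k : ℕ) (hk : 0 < k) (P : Fin k → Fin 3)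
    (hcons : ∀ (i : ℕ) (h : i + 1 < k), P ⟨i, Nat.lt_of_succ_lt h⟩ ≠ P ⟨i + 1, h⟩) :
    rowSde ((List.ofFn fun i : Fin k => Rhat (P i)).prod) (P ⟨0, hk⟩) = k - 1 ∧
    ∀ a : Fin 3, a ≠ P ⟨0, hk⟩ →
      rowSde ((List.ofFn fun i : Fin k => Rhat (P i)).prod) a = k := by
  obtain ⟨n, rfl⟩ : ∃ n, k = n + 1 := ⟨k - 1, by omega⟩
  have hofn : (List.ofFn fun i : Fin (n + 1) => Rhat (P i)) = (List.ofFn P).map Rhat := by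
    rw [List.map_ofFn]; rfl
  have hz : (0 : Fin (n + 1)) = ⟨0, hk⟩ := by ext; simp
  have hP0 : List.ofFn P = P ⟨0, hk⟩ :: List.ofFn (fun i : Fin n => P i.succ) := by
    rw [List.ofFn_succ, hz]
  have hchain : List.Chain' (· ≠ ·) (List.ofFn P) := by
    show List.IsChain _ _; rw [List.isChain_iff_getElem]
    intro i h
    simp only [List.length_ofFn] at h
    rw [List.getElem_ofFn, List.getElem_ofFn]
    exact hcons i (by omega)
  have hmain := main_aux (List.ofFn (fun i : Fin n => P i.succ)) (P ⟨0, hk⟩)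
    (by rw [← hP0]; exact hchain)
  rw [hofn, hP0]
  simpa using hmain
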